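/- Let N ∈ ℕ, let α : Fin N → ℝ, let c₁ > 0 and c₂ > 0 be real, let ℓ ∈ ℕ with 1 ≤ ℓ ≤ N + 1, define θ_k = α_k + 2π for the first ℓ − 1 indices k and θ_k = α_k otherwise, and define F_ℓ : ℂ → ℂ by F_ℓ(s) = exp(−s · log c₁) · ζ_R(c₂ · s) · Σ_{k=0}^{N−1} exp(−i·θ_k·s). Then exp(−F_ℓ′(0)) = (−1)^{ℓ−1} · c₁^{−N/2} · (2π)^{c₂N/2} · exp(−(i/2)·Σ_{k=0}^{N−1} α_k). -/

import Mathlib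

open Complex Real

noncomputable def Gz : ℂ → ℂ := fun s =>
  (π : ℂ) ^ (s / 2) * (s * completedRiemannZeta₀ s - 1 - s / (1 - s)) /
    (2 * Complex.Gamma (s / 2 + 1))

lemma Gz_eq_zeta : Gz =ᶠ[nhds (0 : ℂ)] riemannZeta := by
  have hball : Metric.ball (0:ℂ) 1 ∈ nhds (0:ℂ) := Metric.ball_mem_nhds _ one_pos
  filter_upwards [hball] with s hs
  have hs1 : ‖s‖ < 1 := by simpa using hs
  rcases eq_or_ne s 0 with rfl | hs0
  · simp [Gz, riemannZeta_zero, Complex.Gamma_one]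
  · have hG : Complex.Gamma (s / 2) ≠ 0 := by
      refine Complex.Gamma_ne_zero fun m h => ?_
      have hsm : s = -(2 * (m : ℂ)) := by linear_combination 2 * h
      rcases Nat.eq_zero_or_pos m with rfl | hm
      · exact hs0 (by simpa using hsm)
      · rw [hsm] at hs1
        simp only [norm_neg, norm_mul, Complex.norm_natCast, Complex.norm_ofNat] at hs1
        nlinarith [(Nat.one_le_cast (α := ℝ)).mpr hm]
    have hpi : (π : ℂ) ≠ 0 := by exact_mod_cast Real.pi_ne_zero
    have hpi2 : (π : ℂ) ^ (s / 2) ≠ 0 := by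
      rw [Complex.cpow_def_of_ne_zero hpi]; exact Complex.exp_ne_zero _
    have h1s : (1 : ℂ) - s ≠ 0 := by
      intro h
      rw [sub_eq_zero] at h
      rw [← h] at hs1; simp at hs1
    have hGam : Complex.Gamma (s / 2 + 1) = s / 2 * Complex.Gamma (s / 2) :=
      Complex.Gamma_add_one _ (by simpa using hs0)
    rw [riemannZeta_def_of_ne_zero hs0, completedRiemannZeta_eq, Gammaℝ_def, Gz, hGam,
      neg_div, Complex.cpow_neg]
    field_simp

lemma hasDerivAt_zeta_zero :
    HasDerivAt riemannZeta (-(Real.log (2 * π)) / 2 : ℂ) 0 := by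
  have hpi : (π : ℂ) ≠ 0 := by exact_mod_cast Real.pi_ne_zero
  have hA : HasDerivAt (fun s : ℂ => (π : ℂ) ^ (s / 2))
      ((π : ℂ) ^ ((0:ℂ) / 2) * Complex.log π * (1 / 2)) 0 := by
    simpa using ((hasDerivAt_id (0:ℂ)).div_const 2).const_cpow (Or.inl hpi)
  have hB : HasDerivAt (fun s : ℂ => s * completedRiemannZeta₀ s)
      (1 * completedRiemannZeta₀ 0 + 0 * deriv completedRiemannZeta₀ 0) 0 :=
    (hasDerivAt_id (0:ℂ)).mul (differentiable_completedZeta₀ 0).hasDerivAt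
  have hC : HasDerivAt (fun s : ℂ => s / (1 - s))
      ((1 * (1 - 0) - 0 * (0 - 1)) / (1 - 0) ^ 2) 0 :=
    (hasDerivAt_id (0:ℂ)).div ((hasDerivAt_const (0:ℂ) 1).sub (hasDerivAt_id (0:ℂ)))
      (by norm_num)
  have hD0 : HasDerivAt (fun s : ℂ => Complex.Gamma (s / 2 + 1))
      (-(Real.eulerMascheroniConstant : ℂ) * (1 / 2)) 0 := by
    have hi : HasDerivAt (fun s : ℂ => s / 2 + 1) (1 / 2) 0 := by
      simpa using ((hasDerivAt_id (0:ℂ)).div_const 2).add_const 1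
    have hg : HasDerivAt Complex.Gamma (-(Real.eulerMascheroniConstant : ℂ))
        ((fun s : ℂ => s / 2 + 1) 0) := by
      simpa using Complex.hasDerivAt_Gamma_one
    exact hg.comp 0 hi
  have hD : HasDerivAt (fun s : ℂ => 2 * Complex.Gamma (s / 2 + 1))
      (2 * (-(Real.eulerMascheroniConstant : ℂ) * (1 / 2))) 0 := hD0.const_mul 2
  have hN := hA.mul ((hB.sub_const 1).sub hC)
  have hG := hN.div hD (by norm_num [Complex.Gamma_one])
  have hGz : HasDerivAt Gz (-(Real.log (2 * π)) / 2 : ℂ) 0 := by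
    refine HasDerivAt.congr_deriv hG ?_
    have h0 : completedRiemannZeta₀ 0 =
        (Real.eulerMascheroniConstant - Complex.log (4 * π)) / 2 + 1 := by
      rw [show (0:ℂ) = 1 - 1 by ring, completedRiemannZeta₀_one_sub,
        completedRiemannZeta₀_one]
    have hlpi : Complex.log (π : ℂ) = (Real.log π : ℂ) :=
      (Complex.ofReal_log Real.pi_pos.le).symm
    have hl4pi : Complex.log ((4 : ℂ) * π) = (Real.log (4 * π) : ℂ) := by
      rw [show ((4:ℂ) * π) = ((4 * π : ℝ) : ℂ) by push_cast; ring,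
        ← Complex.ofReal_log (by positivity)]
    rw [h0, hlpi, hl4pi]
    simp only [Pi.mul_apply, Pi.sub_apply, zero_add, Complex.Gamma_one, zero_div, Complex.cpow_zero]
    have key : Real.log (4 * π) + Real.log π = 2 * Real.log (2 * π) := by
      have h1 : Real.log (4 * π) = Real.log 2 + Real.log (2 * π) := by
        rw [show (4:ℝ) * π = 2 * (2 * π) by ring,
          Real.log_mul two_ne_zero (by positivity)]
      have h2 : Real.log (2 * π) = Real.log 2 + Real.log π :=
        Real.log_mul two_ne_zero Real.pi_ne_zero
      linarith
    have keyC : (Real.log (4 * π) : ℂ) + (Real.log π : ℂ) = 2 * (Real.log (2 * π) : ℂ) := by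
      exact_mod_cast congrArg (Complex.ofReal) key
    field_simp
    rw [mul_comm π 2]
    linear_combination (-1 : ℂ) * keyC
  exact hGz.congr_of_eventuallyEq Gz_eq_zeta.symm

/-- The spectral determinant for eigenvalues with power growth on `N` rays, with the
branch cut between the `(ℓ−1)`-st and `ℓ`-th ray:
`exp(−F_ℓ′(0)) = (−1)^{ℓ−1} c₁^{−N/2} (2π)^{c₂N/2} exp(−(i/2) Σ_k α_k)`. -/
theorem power_growth_determinant
    (N : ℕ) (α : Fin N → ℝ) (c₁ c₂ : ℝ) (hc₁ : 0 < c₁) (hc₂ : 0 < c₂)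
    (ℓ : ℕ) (hℓ₁ : 1 ≤ ℓ) (hℓ₂ : ℓ ≤ N + 1)
    (θ : Fin N → ℝ)
    (hθ : ∀ k : Fin N, θ k = if (k : ℕ) < ℓ - 1 then α k + 2 * Real.pi else α k)
    (F : ℂ → ℂ)
    (hF : ∀ s : ℂ, F s = Complex.exp (-s * Real.log c₁) * riemannZeta (c₂ * s) *
      ∑ k : Fin N, Complex.exp (-(Complex.I * θ k * s))) :
    Complex.exp (-(deriv F 0)) =
      (-1) ^ (ℓ - 1) * (c₁ ^ (-(N : ℝ) / 2) : ℝ) * ((2 * Real.pi) ^ (c₂ * N / 2) : ℝ) *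
        Complex.exp (-(Complex.I / 2) * ∑ k : Fin N, (α k : ℂ)) := by
  -- the derivative of F at 0
  set D : ℂ := (N : ℂ) / 2 * Real.log c₁ - (c₂ : ℂ) * N / 2 * Real.log (2 * π) +
    Complex.I / 2 * ∑ k : Fin N, (θ k : ℂ) with hD
  have hP : HasDerivAt (fun s : ℂ => Complex.exp (-s * (Real.log c₁ : ℂ)))
      (-(Real.log c₁ : ℂ)) 0 := by
    simpa using ((hasDerivAt_id (0:ℂ)).neg.mul_const (Real.log c₁ : ℂ)).cexp
  have hQ : HasDerivAt (fun s : ℂ => riemannZeta ((c₂ : ℂ) * s))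
      (-(Real.log (2 * π)) / 2 * (c₂ : ℂ)) 0 := by
    have hi : HasDerivAt (fun s : ℂ => (c₂ : ℂ) * s) (c₂ : ℂ) 0 := by
      simpa using (hasDerivAt_id (0:ℂ)).const_mul (c₂ : ℂ)
    have hz : HasDerivAt riemannZeta (-(Real.log (2 * π)) / 2 : ℂ)
        ((fun s : ℂ => (c₂ : ℂ) * s) 0) := by
      simpa using hasDerivAt_zeta_zero
    exact hz.comp 0 hi
  have hR : HasDerivAt (fun s : ℂ => ∑ k : Fin N, Complex.exp (-(Complex.I * θ k * s)))
      (∑ k : Fin N, -(Complex.I * θ k)) 0 := by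
    apply HasDerivAt.fun_sum
    intro k _
    have : HasDerivAt (fun s : ℂ => -(Complex.I * θ k * s)) (-(Complex.I * θ k)) 0 := by
      simpa [mul_assoc] using ((hasDerivAt_id (0:ℂ)).const_mul (Complex.I * (θ k : ℂ))).fun_neg
    simpa using this.cexp
  have hFd : HasDerivAt F D 0 := by
    have h := (hP.mul hQ).mul hR
    have hFe : F = fun s : ℂ => Complex.exp (-s * Real.log c₁) * riemannZeta (c₂ * s) *
        ∑ k : Fin N, Complex.exp (-(Complex.I * θ k * s)) := funext hF
    rw [hFe]
    refine h.congr_deriv ?_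
    simp only [Pi.mul_apply, mul_zero, neg_zero, zero_mul, Complex.exp_zero, riemannZeta_zero,
      Finset.sum_const, Finset.card_univ, Fintype.card_fin, nsmul_eq_mul, mul_one, one_mul]
    rw [show (∑ k : Fin N, -(Complex.I * (θ k : ℂ))) =
        -(Complex.I * ∑ k : Fin N, (θ k : ℂ)) by
      simp [Finset.mul_sum]  ]
    rw [hD]
    ring
  rw [hFd.deriv]
  -- sum of θ
  have hθsumR : ∑ k : Fin N, θ k = (∑ k : Fin N, α k) + (ℓ - 1 : ℕ) * (2 * π) := by
    have h1 : ∀ k : Fin N, θ k = α k + (if (k : ℕ) < ℓ - 1 then 2 * π else 0) := by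
      intro k; rw [hθ k]; split <;> simp
    simp_rw [h1, Finset.sum_add_distrib]
    congr 1
    rw [Fin.sum_univ_eq_sum_range (fun i => if i < ℓ - 1 then 2 * π else (0:ℝ)),
      ← Finset.sum_filter]
    have : (Finset.range N).filter (· < ℓ - 1) = Finset.range (ℓ - 1) := by
      ext i
      simp only [Finset.mem_filter, Finset.mem_range]
      omega
    rw [this, Finset.sum_const, Finset.card_range, nsmul_eq_mul]
  have hθsum : (∑ k : Fin N, (θ k : ℂ)) =
      (∑ k : Fin N, (α k : ℂ)) + ((ℓ - 1 : ℕ) : ℂ) * (2 * π) := by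
    exact_mod_cast congrArg Complex.ofReal hθsumR
  -- exponential identities
  have e₁ : ((c₁ ^ (-(N : ℝ) / 2) : ℝ) : ℂ) = Complex.exp (-((N : ℂ) / 2 * Real.log c₁)) := by
    rw [Real.rpow_def_of_pos hc₁, Complex.ofReal_exp]
    push_cast
    ring_nf
  have e₂ : (((2 * π) ^ (c₂ * N / 2) : ℝ) : ℂ) =
      Complex.exp ((c₂ : ℂ) * N / 2 * Real.log (2 * π)) := by
    rw [Real.rpow_def_of_pos (by positivity), Complex.ofReal_exp]
    push_cast
    ring_nf
  have e₃ : ((-1 : ℂ)) ^ (ℓ - 1) =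
      Complex.exp (-(((ℓ - 1 : ℕ) : ℂ) * (2 * π)) * Complex.I / 2) := by
    have h : (-(((ℓ - 1 : ℕ) : ℂ) * (2 * π)) * Complex.I / 2) =
        ((ℓ - 1 : ℕ) : ℂ) * (-(π * Complex.I)) := by push_cast; ring
    rw [h, Complex.exp_nat_mul, Complex.exp_neg, Complex.exp_pi_mul_I]
    norm_num
  rw [e₁, e₂, e₃, ← Complex.exp_add, ← Complex.exp_add, ← Complex.exp_add]
  congr 1
  rw [hD, hθsum]
  push_cast
  ring
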